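/- Let K ≥ 2 be even, let v ∈ C^K(ℝ) be bounded with v(ξ) > 0 and |v'(ξ)| ≤ C v(ξ), and let Q(x) = Σ_{k=0}^K q_k x^k be a real polynomial with q_K > 0. Suppose Q(x_0) < 0 for some x_0 ∈ ℝ. Then for every N ∈ ℕ there exist linearly independent functions g_1, …, g_N with g_j ∈ L^2(ℝ) and v·g_j ∈ 𝒮(ℝ) such that every nonzero linear combination g = Σ_j α_j g_j satisfies ∫_ℝ [Q(D)(v·g)](ξ)·v(ξ)·conj(g(ξ)) dξ < 0; i.e. the quadratic form of vQ(D)v is negative definite on an N-dimensional subspace for every N (the negative spectrum is infinite). -/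

import Mathlib

open MeasureTheory Real Set ComplexConjugate
open scoped ComplexOrder
open scoped ContDiff

/-- The differential expression `Q(D) u = ∑_k q_k i^k u^{(k)}` with `D = i d/dξ`. -/
noncomputable def QD (K : ℕ) (q : ℕ → ℝ) (u : ℝ → ℂ) (ξ : ℝ) : ℂ :=
  ∑ k ∈ Finset.range (K + 1), (q k : ℂ) * Complex.I ^ k * iteratedDeriv k u ξ


namespace VQDVaux

noncomputable def ψb : ContDiffBump (0:ℝ) := ⟨1, 2, one_pos, one_lt_two⟩

noncomputable def ψ : ℝ → ℝ := ⇑ψb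

lemma ψ_smooth : ContDiff ℝ ∞ ψ := ψb.contDiff

lemma ψ_cont : Continuous ψ := ψ_smooth.continuous

lemma ψ_zero {x : ℝ} (hx : (2:ℝ) ≤ |x|) : ψ x = 0 :=
  ψb.zero_of_le_dist (by simpa [Real.dist_eq, ψb] using hx)

lemma ψ_even (x : ℝ) : ψ (-x) = ψ x := by
  have := ψb.sub x
  simpa [ψ] using this

lemma ψ_at_zero : ψ 0 = 1 :=
  ψb.one_of_mem_closedBall (by simp [ψb])

lemma ψ_hcs : HasCompactSupport ψ := ψb.hasCompactSupport

lemma hasDerivAt_iteratedDeriv {F : Type*} [NormedAddCommGroup F] [NormedSpace ℝ F]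
    {f : ℝ → F} (hf : ContDiff ℝ ∞ f) (m : ℕ) (x : ℝ) :
    HasDerivAt (iteratedDeriv m f) (iteratedDeriv (m+1) f x) x := by
  have hd : DifferentiableAt ℝ (iteratedDeriv m f) x :=
    (hf.differentiable_iteratedDeriv m (by exact_mod_cast ENat.coe_lt_top m)).differentiableAt
  rw [iteratedDeriv_succ]
  exact hd.hasDerivAt

lemma ψm_cont (m : ℕ) : Continuous (iteratedDeriv m ψ) :=
  ψ_smooth.continuous_iteratedDeriv m (by exact_mod_cast le_top)

/-- Leibniz-type formula for `exp(aξ) * B ξ`. -/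
lemma key (a : ℂ) {B : ℝ → ℂ} (hB : ContDiff ℝ ∞ B) (k : ℕ) (ξ : ℝ) :
    iteratedDeriv k (fun ξ : ℝ => Complex.exp (a * ξ) * B ξ) ξ
      = Complex.exp (a * ξ) * ∑ m ∈ Finset.range (k+1),
          (k.choose m : ℂ) * a ^ (k - m) * iteratedDeriv m B ξ := by
  induction k generalizing ξ with
  | zero => simp
  | succ k ih =>
    rw [iteratedDeriv_succ,
      show iteratedDeriv k (fun ξ : ℝ => Complex.exp (a * ξ) * B ξ)
        = fun ξ : ℝ => Complex.exp (a * ξ) * ∑ m ∈ Finset.range (k+1),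
            (k.choose m : ℂ) * a ^ (k - m) * iteratedDeriv m B ξ from funext ih]
    have hA : HasDerivAt (fun ξ : ℝ => Complex.exp (a * ξ)) (a * Complex.exp (a * ξ)) ξ := by
      have h1 : HasDerivAt (fun z : ℂ => Complex.exp (a * z)) (a * Complex.exp (a * (ξ:ℂ))) (ξ:ℂ) := by
        simpa [Function.comp_def, mul_comm] using
          (Complex.hasDerivAt_exp (a * (ξ:ℂ))).comp (ξ:ℂ) ((hasDerivAt_id (ξ:ℂ)).const_mul a)
      exact h1.comp_ofReal
    have hS : HasDerivAt
        (fun ξ : ℝ => ∑ m ∈ Finset.range (k+1), (k.choose m : ℂ) * a ^ (k - m) * iteratedDeriv m B ξ)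
        (∑ m ∈ Finset.range (k+1), (k.choose m : ℂ) * a ^ (k - m) * iteratedDeriv (m+1) B ξ) ξ := by
      refine HasDerivAt.fun_sum fun m _ => ?_
      simpa [mul_assoc] using ((hasDerivAt_iteratedDeriv hB m ξ).const_mul ((k.choose m : ℂ) * a ^ (k - m)))
    rw [(hA.fun_mul hS).deriv]
    have hsum : a * (∑ m ∈ Finset.range (k+1), (k.choose m : ℂ) * a ^ (k - m) * iteratedDeriv m B ξ)
        + (∑ m ∈ Finset.range (k+1), (k.choose m : ℂ) * a ^ (k - m) * iteratedDeriv (m+1) B ξ)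
        = ∑ m ∈ Finset.range (k+1+1), ((k+1).choose m : ℂ) * a ^ (k+1-m) * iteratedDeriv m B ξ := by
      rw [Finset.mul_sum,
        Finset.sum_range_succ' (fun m => ((k+1).choose m : ℂ) * a ^ (k+1-m) * iteratedDeriv m B ξ) (k+1),
        Finset.sum_range_succ' (fun m => a * ((k.choose m : ℂ) * a ^ (k - m) * iteratedDeriv m B ξ)) k]
      have hext : ∑ m ∈ Finset.range k,
            a * ((k.choose (m+1) : ℂ) * a ^ (k - (m+1)) * iteratedDeriv (m+1) B ξ)
          = ∑ m ∈ Finset.range (k+1),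
            a * ((k.choose (m+1) : ℂ) * a ^ (k - (m+1)) * iteratedDeriv (m+1) B ξ) := by
        rw [Finset.sum_range_succ, Nat.choose_succ_self]
        simp
      rw [hext, add_right_comm, ← Finset.sum_add_distrib]
      congr 1
      · refine Finset.sum_congr rfl fun m hm => ?_
        have hm' : m ≤ k := Nat.lt_succ_iff.mp (Finset.mem_range.mp hm)
        rcases eq_or_lt_of_le hm' with rfl | hmk
        · simp [Nat.choose_succ_self, Nat.choose_self]
        · have h1 : k - (m+1) + 1 = k - m := by omega
          have h2 : k + 1 - (m+1) = k - m := by omega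
          rw [h2, Nat.choose_succ_succ' k m]
          push_cast
          rw [← h1, pow_succ]
          ring
      · simp [pow_succ]
        ring
    rw [← hsum]
    ring


lemma ψm_hcs (m : ℕ) : HasCompactSupport (iteratedDeriv m ψ) := by
  have h := ψ_hcs.iteratedFDeriv (𝕜 := ℝ) m
  have : iteratedDeriv m ψ = fun x => (iteratedFDeriv ℝ m ψ x) (fun _ => (1:ℝ)) := by
    funext x; rw [iteratedDeriv_eq_iteratedFDeriv]
  rw [this]
  exact h.comp_left (g := fun L : (ℝ [×m]→L[ℝ] ℝ) => L (fun _ => (1:ℝ))) (by simp)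

noncomputable def J (m : ℕ) : ℝ := ∫ u : ℝ, iteratedDeriv m ψ u * ψ u

lemma J_integrable (m : ℕ) : Integrable (fun u => iteratedDeriv m ψ u * ψ u) :=
  ((ψm_cont m).mul ψ_smooth.continuous).integrable_of_hasCompactSupport ψ_hcs.mul_left

lemma J_zero_pos : 0 < J 0 := by
  have h0 : (fun u => iteratedDeriv 0 ψ u * ψ u) = fun u => ψ u * ψ u := by
    funext u; rw [iteratedDeriv_zero]
  rw [J, h0]
  refine (integral_pos_iff_support_of_nonneg (fun u => mul_self_nonneg _) ?_).mpr ?_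
  · have := J_integrable 0; rwa [h0] at this
  · have hsupp : Function.support (fun u => ψ u * ψ u) = Function.support ψ := by
      ext u; simp [Function.mem_support, mul_self_eq_zero]
    rw [hsupp, show Function.support ψ = Metric.ball (0:ℝ) 2 from ψb.support_eq]
    simpa using Metric.measure_ball_pos volume (0:ℝ) (by norm_num : (0:ℝ) < 2)

lemma J_odd {m : ℕ} (hm : Odd m) : J m = 0 := by
  have h2 : (fun x : ℝ => ψ (-x)) = ψ := funext ψ_even
  have h1 : ∀ u : ℝ, iteratedDeriv m ψ (-u) = (-1:ℝ)^m * iteratedDeriv m ψ u := by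
    intro u
    have h3 := iteratedDeriv_comp_neg m ψ (-u)
    rw [h2] at h3
    simpa [smul_eq_mul] using h3
  have h4 := integral_neg_eq_self (fun u => iteratedDeriv m ψ u * ψ u) volume
  have h5 : (∫ u : ℝ, iteratedDeriv m ψ (-u) * ψ (-u)) = (-1:ℝ)^m * J m := by
    rw [show (fun u : ℝ => iteratedDeriv m ψ (-u) * ψ (-u))
        = fun u => (-1:ℝ)^m * (iteratedDeriv m ψ u * ψ u) from
      funext fun u => by rw [h1, ψ_even]; ring]
    rw [integral_const_mul]; rfl
  rw [h5, hm.neg_one_pow] at h4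
  have : J m = - J m := by rw [show (∫ (x : ℝ), iteratedDeriv m ψ x * ψ x) = J m from rfl] at h4; linarith
  linarith

lemma ψcomp_smooth (ε c : ℝ) : ContDiff ℝ ∞ (fun ξ : ℝ => ((ψ (ε * ξ - c) : ℝ) : ℂ)) :=
  Complex.ofRealCLM.contDiff.comp
    (ψ_smooth.comp (((contDiff_const.mul contDiff_id).sub contDiff_const)))

lemma iteratedDeriv_ψcomp (ε c : ℝ) (m : ℕ) (ξ : ℝ) :
    iteratedDeriv m (fun ξ : ℝ => ((ψ (ε * ξ - c) : ℝ) : ℂ)) ξ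
      = (ε:ℂ)^m * ((iteratedDeriv m ψ (ε * ξ - c) : ℝ) : ℂ) := by
  induction m generalizing ξ with
  | zero => simp
  | succ m ih =>
    rw [iteratedDeriv_succ,
      show iteratedDeriv m (fun ξ : ℝ => ((ψ (ε * ξ - c) : ℝ) : ℂ))
        = fun ξ : ℝ => (ε:ℂ)^m * ((iteratedDeriv m ψ (ε * ξ - c) : ℝ) : ℂ) from funext ih]
    have haff : HasDerivAt (fun ξ : ℝ => ε * ξ - c) ε ξ := by
      simpa using ((hasDerivAt_id ξ).const_mul ε).sub_const c
    have hinner : HasDerivAt (fun ξ : ℝ => iteratedDeriv m ψ (ε * ξ - c))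
        (iteratedDeriv (m+1) ψ (ε * ξ - c) * ε) ξ := by
      simpa [Function.comp_def] using
        (hasDerivAt_iteratedDeriv ψ_smooth m (ε * ξ - c)).comp ξ haff
    have h2 : HasDerivAt (fun ξ : ℝ => (ε:ℂ)^m * ((iteratedDeriv m ψ (ε * ξ - c) : ℝ) : ℂ))
        ((ε:ℂ)^m * ((iteratedDeriv (m+1) ψ (ε * ξ - c) * ε : ℝ) : ℂ)) ξ :=
      (hinner.ofReal_comp).const_mul _
    rw [h2.deriv]
    push_cast
    ring

/-- The localized wave packet. -/
noncomputable def φf (x₀ ε c : ℝ) : ℝ → ℂ :=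
  fun ξ : ℝ => Complex.exp (-(Complex.I * (x₀:ℂ)) * (ξ:ℂ)) * ((ψ (ε * ξ - c) : ℝ) : ℂ)

lemma φf_smooth (x₀ ε c : ℝ) : ContDiff ℝ ∞ (φf x₀ ε c) := by
  refine ContDiff.mul ?_ (ψcomp_smooth ε c)
  exact Complex.contDiff_exp.comp (contDiff_const.mul Complex.ofRealCLM.contDiff)

lemma pow_I {k m : ℕ} (hm : m ≤ k) (x₀ : ℝ) :
    Complex.I^k * (-(Complex.I * (x₀:ℂ)))^(k-m) = Complex.I^m * (x₀:ℂ)^(k-m) := by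
  have h2 : Complex.I ^ k = Complex.I ^ m * Complex.I ^ (k - m) := by
    rw [← pow_add]; congr 1; omega
  have h3 : Complex.I * -Complex.I = 1 := by
    rw [mul_neg, Complex.I_mul_I, neg_neg]
  calc Complex.I^k * (-(Complex.I * (x₀:ℂ)))^(k-m)
      = Complex.I^m * ((Complex.I * -Complex.I)^(k-m) * (x₀:ℂ)^(k-m)) := by
        rw [h2, show (-(Complex.I * (x₀:ℂ))) = (-Complex.I) * (x₀:ℂ) from by ring,
          mul_pow, mul_pow]
        ring
    _ = Complex.I^m * (x₀:ℂ)^(k-m) := by rw [h3, one_pow, one_mul]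


noncomputable def Efun (K : ℕ) (q : ℕ → ℝ) (x₀ ε : ℝ) : ℂ :=
  ∑ k ∈ Finset.range (K+1), ∑ m ∈ Finset.range (k+1),
    (q k : ℂ) * (k.choose m : ℂ) * (x₀:ℂ)^(k-m) * (Complex.I * (ε:ℂ))^m * ((J m : ℝ) : ℂ)

lemma away {ε : ℝ} (hε : 0 < ε) (c : ℝ) {ξ : ℝ}
    (hξ : ξ ∉ Icc ((c-2)/ε) ((c+2)/ε)) : 2 ≤ |ε * ξ - c| := by
  rw [Set.mem_Icc, not_and_or, not_le, not_le] at hξ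
  rcases hξ with h | h
  · have : ξ * ε < c - 2 := (lt_div_iff₀ hε).mp h
    rw [abs_sub_comm, abs_of_nonneg (by nlinarith)]
    nlinarith [mul_comm ξ ε]
  · have : c + 2 < ξ * ε := (div_lt_iff₀ hε).mp h
    rw [abs_of_nonneg (by nlinarith)]
    nlinarith [mul_comm ξ ε]

lemma base_integrable {ε : ℝ} (hε : 0 < ε) (c : ℝ) (m : ℕ) :
    Integrable (fun ξ : ℝ => ((iteratedDeriv m ψ (ε * ξ - c) * ψ (ε * ξ - c) : ℝ) : ℂ)) := by
  refine Continuous.integrable_of_hasCompactSupport ?_ ?_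
  · exact Complex.continuous_ofReal.comp
      (((ψm_cont m).comp ((continuous_const.mul continuous_id).sub continuous_const)).mul
        (ψ_smooth.continuous.comp ((continuous_const.mul continuous_id).sub continuous_const)))
  · refine HasCompactSupport.intro (isCompact_Icc (a := (c-2)/ε) (b := (c+2)/ε)) ?_
    intro ξ hξ
    have h2 := away hε c hξ
    simp [ψ_zero h2]

lemma base_integral {ε : ℝ} (hε : 0 < ε) (c : ℝ) (m : ℕ) :
    (∫ ξ : ℝ, ((iteratedDeriv m ψ (ε * ξ - c) * ψ (ε * ξ - c) : ℝ) : ℂ))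
      = ((ε⁻¹ * J m : ℝ) : ℂ) := by
  have key2 : (∫ ξ : ℝ, iteratedDeriv m ψ (ε * ξ - c) * ψ (ε * ξ - c)) = ε⁻¹ * J m := by
    have h1 : (fun ξ : ℝ => iteratedDeriv m ψ (ε * ξ - c) * ψ (ε * ξ - c))
        = fun ξ : ℝ => (fun y : ℝ => iteratedDeriv m ψ (y - c) * ψ (y - c)) (ε * ξ) := rfl
    rw [h1, Measure.integral_comp_mul_left (fun y : ℝ => iteratedDeriv m ψ (y - c) * ψ (y - c)) ε]
    have h2 : (fun y : ℝ => iteratedDeriv m ψ (y - c) * ψ (y - c))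
        = fun y : ℝ => (fun u : ℝ => iteratedDeriv m ψ u * ψ u) (y - c) := rfl
    rw [h2, integral_sub_right_eq_self (fun u : ℝ => iteratedDeriv m ψ u * ψ u) c]
    rw [abs_of_pos (inv_pos.mpr hε), smul_eq_mul]
    rfl
  rw [← key2]
  exact integral_ofReal

lemma integrand_pt (K : ℕ) (q : ℕ → ℝ) (x₀ : ℝ) (ε c : ℝ) (ξ : ℝ) :
    QD K q (φf x₀ ε c) ξ * conj (φf x₀ ε c ξ)
      = ∑ k ∈ Finset.range (K+1), ∑ m ∈ Finset.range (k+1),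
          (q k : ℂ) * (k.choose m : ℂ) * (x₀:ℂ)^(k-m) * (Complex.I * (ε:ℂ))^m
            * ((iteratedDeriv m ψ (ε * ξ - c) * ψ (ε * ξ - c) : ℝ) : ℂ) := by
  have hconj : conj (φf x₀ ε c ξ)
      = Complex.exp (-(-(Complex.I * (x₀:ℂ)) * (ξ:ℂ))) * ((ψ (ε * ξ - c) : ℝ) : ℂ) := by
    rw [φf, map_mul, ← Complex.exp_conj, Complex.conj_ofReal]
    congr 2
    simp
  have hexp1 : Complex.exp (-(Complex.I * (x₀:ℂ)) * (ξ:ℂ))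
      * Complex.exp (-(-(Complex.I * (x₀:ℂ)) * (ξ:ℂ))) = 1 := by
    rw [← Complex.exp_add, add_neg_cancel, Complex.exp_zero]
  rw [QD, Finset.sum_mul]
  refine Finset.sum_congr rfl fun k hk => ?_
  have hderiv : iteratedDeriv k (φf x₀ ε c) ξ
      = Complex.exp (-(Complex.I * (x₀:ℂ)) * (ξ:ℂ)) * ∑ m ∈ Finset.range (k+1),
          (k.choose m : ℂ) * (-(Complex.I * (x₀:ℂ)))^(k-m)
            * ((ε:ℂ)^m * ((iteratedDeriv m ψ (ε * ξ - c) : ℝ) : ℂ)) := by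
    rw [show φf x₀ ε c = fun ξ : ℝ =>
        Complex.exp (-(Complex.I * (x₀:ℂ)) * (ξ:ℂ)) * ((ψ (ε * ξ - c) : ℝ) : ℂ) from rfl,
      key (-(Complex.I * (x₀:ℂ))) (ψcomp_smooth ε c) k ξ]
    simp_rw [iteratedDeriv_ψcomp ε c]
  rw [hderiv, hconj]
  rw [show ∀ A B S P : ℂ, (q k : ℂ) * Complex.I ^ k * (A * S) * (B * P)
      = (A * B) * ((q k : ℂ) * Complex.I ^ k * S * P) from fun A B S P => by ring, hexp1, one_mul]
  rw [Finset.mul_sum, Finset.sum_mul]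
  refine Finset.sum_congr rfl fun m hm => ?_
  have hm' : m ≤ k := Nat.lt_succ_iff.mp (Finset.mem_range.mp hm)
  have hpowI := pow_I hm' x₀
  push_cast
  calc (q k : ℂ) * Complex.I ^ k * ((k.choose m : ℂ) * (-(Complex.I * (x₀:ℂ)))^(k-m)
          * ((ε:ℂ)^m * ((iteratedDeriv m ψ (ε * ξ - c) : ℝ) : ℂ))) * ((ψ (ε * ξ - c) : ℝ) : ℂ)
      = (Complex.I ^ k * (-(Complex.I * (x₀:ℂ)))^(k-m)) * ((q k : ℂ) * (k.choose m : ℂ)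
          * ((ε:ℂ)^m * ((iteratedDeriv m ψ (ε * ξ - c) : ℝ) : ℂ)) * ((ψ (ε * ξ - c) : ℝ) : ℂ)) := by
        ring
    _ = (q k : ℂ) * (k.choose m : ℂ) * (x₀:ℂ)^(k-m) * (Complex.I * (ε:ℂ))^m
          * (((iteratedDeriv m ψ (ε * ξ - c) : ℝ) : ℂ) * ((ψ (ε * ξ - c) : ℝ) : ℂ)) := by
        rw [hpowI, mul_pow]
        ring

lemma integral_QD_phi (K : ℕ) (q : ℕ → ℝ) (x₀ : ℝ) {ε : ℝ} (hε : 0 < ε) (c : ℝ) :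
    (∫ ξ : ℝ, QD K q (φf x₀ ε c) ξ * conj (φf x₀ ε c ξ))
      = ((ε⁻¹ : ℝ) : ℂ) * Efun K q x₀ ε := by
  rw [show (fun ξ : ℝ => QD K q (φf x₀ ε c) ξ * conj (φf x₀ ε c ξ))
      = fun ξ : ℝ => ∑ k ∈ Finset.range (K+1), ∑ m ∈ Finset.range (k+1),
          (q k : ℂ) * (k.choose m : ℂ) * (x₀:ℂ)^(k-m) * (Complex.I * (ε:ℂ))^m
            * ((iteratedDeriv m ψ (ε * ξ - c) * ψ (ε * ξ - c) : ℝ) : ℂ)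
      from funext (integrand_pt K q x₀ ε c)]
  rw [integral_finset_sum _ (fun k _ => integrable_finset_sum _
    (fun m _ => ((base_integrable hε c m).const_mul _)))]
  rw [Efun, Finset.mul_sum]
  refine Finset.sum_congr rfl fun k _ => ?_
  rw [integral_finset_sum _ (fun m _ => ((base_integrable hε c m).const_mul _)),
    Finset.mul_sum]
  refine Finset.sum_congr rfl fun m _ => ?_
  rw [integral_const_mul, base_integral hε c m]
  push_cast
  ring


lemma Efun_cont (K : ℕ) (q : ℕ → ℝ) (x₀ : ℝ) : Continuous (Efun K q x₀) := by
  unfold Efun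
  refine continuous_finset_sum _ fun k _ => continuous_finset_sum _ fun m _ => ?_
  exact ((continuous_const.mul ((continuous_const.mul
    Complex.continuous_ofReal).pow m)).mul continuous_const)

lemma Efun_zero (K : ℕ) (q : ℕ → ℝ) (x₀ : ℝ) :
    Efun K q x₀ 0 = (((∑ k ∈ Finset.range (K+1), q k * x₀^k) * J 0 : ℝ) : ℂ) := by
  unfold Efun
  push_cast
  rw [Finset.sum_mul]
  refine Finset.sum_congr rfl fun k _ => ?_
  rw [Finset.sum_eq_single_of_mem 0 (Finset.mem_range.mpr (Nat.succ_pos k))]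
  · simp
  · intro m _ hm
    simp [zero_pow hm]

lemma Efun_conj (K : ℕ) (q : ℕ → ℝ) (x₀ ε : ℝ) :
    conj (Efun K q x₀ ε) = Efun K q x₀ ε := by
  unfold Efun
  rw [map_sum]
  refine Finset.sum_congr rfl fun k _ => ?_
  rw [map_sum]
  refine Finset.sum_congr rfl fun m _ => ?_
  rcases Nat.even_or_odd m with hm | hm
  · have h1 : ((-Complex.I) * (ε:ℂ))^m = (Complex.I * (ε:ℂ))^m := by
      rw [show (-Complex.I) * (ε:ℂ) = -(Complex.I * (ε:ℂ)) from by ring, hm.neg_pow]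
    simp only [map_mul, map_pow, Complex.conj_ofReal, Complex.conj_I, map_natCast]
    rw [h1]
  · rw [J_odd hm]
    simp

lemma exists_eps (K : ℕ) (q : ℕ → ℝ) (x₀ : ℝ)
    (hx₀ : ∑ k ∈ Finset.range (K + 1), q k * x₀ ^ k < 0) :
    ∃ ε : ℝ, 0 < ε ∧ Efun K q x₀ ε < 0 := by
  have hcont : Continuous fun ε => (Efun K q x₀ ε).re :=
    Complex.continuous_re.comp (Efun_cont K q x₀)
  have h0 : (Efun K q x₀ 0).re < 0 := by
    rw [Efun_zero, Complex.ofReal_re]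
    exact mul_neg_of_neg_of_pos hx₀ J_zero_pos
  have hopen : IsOpen {ε : ℝ | (Efun K q x₀ ε).re < 0} := isOpen_lt hcont continuous_const
  obtain ⟨δ, hδ, hball⟩ := Metric.isOpen_iff.mp hopen 0 h0
  have hmem : δ/2 ∈ Metric.ball (0:ℝ) δ := by
    rw [Metric.mem_ball, Real.dist_eq, sub_zero, abs_of_pos (half_pos hδ)]
    linarith
  refine ⟨δ/2, half_pos hδ, ?_⟩
  rw [Complex.lt_def]
  refine ⟨by simpa using hball hmem, ?_⟩
  have := Efun_conj K q x₀ (δ/2)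
  rw [Complex.conj_eq_iff_im] at this
  simpa using this


lemma φf_hcs (x₀ : ℝ) {ε : ℝ} (hε : 0 < ε) (c : ℝ) : HasCompactSupport (φf x₀ ε c) := by
  refine HasCompactSupport.intro (isCompact_Icc (a := (c-2)/ε) (b := (c+2)/ε)) ?_
  intro ξ hξ
  simp [φf, ψ_zero (away hε c hξ)]

lemma φf_zero_of_far (x₀ : ℝ) (ε c : ℝ) {ξ : ℝ} (h : 2 ≤ |ε * ξ - c|) : φf x₀ ε c ξ = 0 := by
  simp [φf, ψ_zero h]

/-- Derivatives of `φf x₀ ε c` vanish where `2 < |εξ - c|`. -/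
lemma iteratedDeriv_φf_zero (x₀ ε c : ℝ) (k : ℕ) {ξ : ℝ} (h : 2 < |ε * ξ - c|) :
    iteratedDeriv k (φf x₀ ε c) ξ = 0 := by
  have hU : IsOpen {ξ' : ℝ | 2 < |ε * ξ' - c|} := by
    have hcont : Continuous fun ξ' : ℝ => |ε * ξ' - c| :=
      ((continuous_const.mul continuous_id).sub continuous_const).abs
    exact isOpen_lt continuous_const hcont
  have heq : Set.EqOn (φf x₀ ε c) (fun _ => (0:ℂ)) {ξ' : ℝ | 2 < |ε * ξ' - c|} := by
    intro ξ' hξ'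
    exact φf_zero_of_far x₀ ε c (le_of_lt hξ')
  have h2 := heq.iteratedDeriv_of_isOpen hU k h
  rw [h2]
  have : iteratedDeriv k (fun _ : ℝ => (0:ℂ)) = fun _ => 0 := by
    ext x; rw [iteratedDeriv]; simp
  rw [this]

lemma QD_phi_mul_phi_eq_zero (K : ℕ) (q : ℕ → ℝ) (x₀ : ℝ) (ε : ℝ) {c c' : ℝ}
    (h : 4 ≤ |c - c'|) (ξ : ℝ) :
    QD K q (φf x₀ ε c) ξ * conj (φf x₀ ε c' ξ) = 0 := by
  rcases le_or_gt 2 |ε * ξ - c'| with h' | h'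
  · rw [φf_zero_of_far x₀ ε c' h']
    simp
  · have h2 : 2 < |ε * ξ - c| := by
      have ht := abs_sub_le c (ε * ξ) c'
      have : |ε * ξ - c| = |c - ε * ξ| := abs_sub_comm _ _
      linarith
    have hQD : QD K q (φf x₀ ε c) ξ = 0 := by
      rw [QD]
      refine Finset.sum_eq_zero fun k _ => ?_
      rw [iteratedDeriv_φf_zero x₀ ε c k h2]
      simp
    rw [hQD, zero_mul]

lemma schwartz_exists {f : ℝ → ℂ} (hf : ContDiff ℝ ∞ f) (hc : HasCompactSupport f) :
    ∃ φS : SchwartzMap ℝ ℂ, ∀ ξ : ℝ, φS ξ = f ξ := by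
  have hdecay : ∀ k n : ℕ, ∃ C : ℝ, ∀ x : ℝ, ‖x‖ ^ k * ‖iteratedFDeriv ℝ n f x‖ ≤ C := by
    intro k n
    have h1 : Continuous fun x : ℝ => ‖x‖ ^ k * ‖iteratedFDeriv ℝ n f x‖ := by
      exact (continuous_id.norm.pow k).mul
        ((hf.continuous_iteratedFDeriv (by exact_mod_cast le_top)).norm)
    have h2 : HasCompactSupport fun x : ℝ => ‖x‖ ^ k * ‖iteratedFDeriv ℝ n f x‖ :=
      ((hc.iteratedFDeriv n).norm).mul_left
    obtain ⟨C, hC⟩ := h2.exists_bound_of_continuous h1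
    exact ⟨C, fun x => by simpa [Real.norm_eq_abs] using hC x⟩
  exact ⟨⟨f, hf, hdecay⟩, fun _ => rfl⟩

lemma iteratedDeriv_linC {ι : Type*} (s : Finset ι) (α : ι → ℂ) (f : ι → ℝ → ℂ)
    (hf : ∀ i ∈ s, ContDiff ℝ ∞ (f i)) (k : ℕ) (ξ : ℝ) :
    iteratedDeriv k (fun ξ : ℝ => ∑ i ∈ s, α i * f i ξ) ξ
      = ∑ i ∈ s, α i * iteratedDeriv k (f i) ξ := by
  induction k generalizing ξ with
  | zero => simp
  | succ k ih =>
    rw [iteratedDeriv_succ,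
      show iteratedDeriv k (fun ξ : ℝ => ∑ i ∈ s, α i * f i ξ)
        = fun ξ : ℝ => ∑ i ∈ s, α i * iteratedDeriv k (f i) ξ from funext ih]
    have h := HasDerivAt.fun_sum (x := ξ)
      (fun i hi => ((hasDerivAt_iteratedDeriv (hf i hi) k ξ).const_mul (α i)))
    rw [h.deriv]

lemma QD_cont (K : ℕ) (q : ℕ → ℝ) {f : ℝ → ℂ} (hf : ContDiff ℝ ∞ f) :
    Continuous (QD K q f) := by
  rw [show QD K q f = fun ξ => ∑ k ∈ Finset.range (K + 1),
      (q k : ℂ) * Complex.I ^ k * iteratedDeriv k f ξ from rfl]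
  exact continuous_finset_sum _ fun k _ => continuous_const.mul
    (hf.continuous_iteratedDeriv k (by exact_mod_cast le_top))

lemma QD_phi_int (K : ℕ) (q : ℕ → ℝ) (x₀ : ℝ) {ε : ℝ} (hε : 0 < ε) (c c' : ℝ) :
    Integrable (fun ξ : ℝ => QD K q (φf x₀ ε c) ξ * conj (φf x₀ ε c' ξ)) := by
  refine Continuous.integrable_of_hasCompactSupport ?_ ?_
  · exact (QD_cont K q (φf_smooth x₀ ε c)).mul
      (Complex.continuous_conj.comp (φf_smooth x₀ ε c').continuous)
  · have hconj : HasCompactSupport fun ξ : ℝ => conj (φf x₀ ε c' ξ) :=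
      (φf_hcs x₀ hε c').comp_left (g := (starRingEnd ℂ)) (by simp)
    exact hconj.mul_left

end VQDVaux


open VQDVaux in
/-- If `Q(x₀) < 0` for some `x₀`, the quadratic form of `A = v Q(D) v` is negative definite on
an `N`-dimensional subspace for every `N`: the negative spectrum is infinite. -/
theorem vQDv_infinite_negative_spectrum
    (K : ℕ) (hK : 2 ≤ K) (hKeven : Even K) (v : ℝ → ℝ) (q : ℕ → ℝ)
    (hv : ContDiff ℝ K v) (hvbdd : ∃ M : ℝ, ∀ ξ, v ξ ≤ M) (hvpos : ∀ ξ, 0 < v ξ)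
    (C : ℝ) (hv' : ∀ ξ, |deriv v ξ| ≤ C * v ξ)
    (hqK : 0 < q K)
    (x₀ : ℝ) (hx₀ : ∑ k ∈ Finset.range (K + 1), q k * x₀ ^ k < 0) :
    ∀ N : ℕ, ∃ g : Fin N → ℝ → ℂ,
      (∀ j, MemLp (g j) 2 (volume : Measure ℝ)) ∧
      (∀ j, ∃ φ : SchwartzMap ℝ ℂ, ∀ ξ : ℝ, (v ξ : ℂ) * g j ξ = φ ξ) ∧
      LinearIndependent ℂ g ∧
      (∀ α : Fin N → ℂ, α ≠ 0 →
        (∫ ξ : ℝ, QD K q (fun η => (v η : ℂ) * ∑ j, α j * g j η) ξ * (v ξ : ℂ)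
            * conj (∑ j, α j * g j ξ)) < 0) := by
  intro N
  obtain ⟨ε, hε, hEneg⟩ := exists_eps K q x₀ hx₀
  have hvne : ∀ ξ : ℝ, (v ξ : ℂ) ≠ 0 := fun ξ => by exact_mod_cast (hvpos ξ).ne'
  set c : Fin N → ℝ := fun j => 5 * ((j : ℕ) : ℝ) with hc
  set φ : Fin N → ℝ → ℂ := fun j => φf x₀ ε (c j) with hφ
  have hsep : ∀ j l : Fin N, j ≠ l → (4:ℝ) ≤ |c j - c l| := by
    intro j l hjl
    have hne : (j:ℕ) ≠ (l:ℕ) := fun h => hjl (Fin.val_injective h)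
    have h1 : (1:ℝ) ≤ |((j:ℕ):ℝ) - ((l:ℕ):ℝ)| := by
      rcases hne.lt_or_gt with h' | h'
      · have h2 : ((j:ℕ):ℝ) + 1 ≤ ((l:ℕ):ℝ) := by exact_mod_cast h'
        rw [abs_sub_comm, abs_of_nonneg (by linarith)]; linarith
      · have h2 : ((l:ℕ):ℝ) + 1 ≤ ((j:ℕ):ℝ) := by exact_mod_cast h'
        rw [abs_of_nonneg (by linarith)]; linarith
    have h5 : c j - c l = 5 * (((j:ℕ):ℝ) - ((l:ℕ):ℝ)) := by simp only [hc]; ring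
    rw [h5, abs_mul, abs_of_pos (show (0:ℝ) < 5 by norm_num)]
    linarith
  refine ⟨fun j ξ => φ j ξ / (v ξ : ℂ), ?_, ?_, ?_, ?_⟩
  · -- Memℒp
    intro j
    refine Continuous.memLp_of_hasCompactSupport ?_ ?_
    · exact ((φf_smooth x₀ ε (c j)).continuous).div
        (Complex.continuous_ofReal.comp hv.continuous) hvne
    · refine (φf_hcs x₀ hε (c j)).mono ?_
      intro ξ hξ
      rw [Function.mem_support] at hξ ⊢
      intro h0
      apply hξ
      show φ j ξ / (v ξ : ℂ) = 0
      simp only [hφ]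
      rw [h0, zero_div]
  · -- Schwartz
    intro j
    obtain ⟨φS, hφS⟩ := schwartz_exists (φf_smooth x₀ ε (c j)) (φf_hcs x₀ hε (c j))
    refine ⟨φS, fun ξ => ?_⟩
    rw [hφS ξ, mul_comm, div_mul_cancel₀ _ (hvne ξ)]
  · -- linear independence
    rw [Fintype.linearIndependent_iff]
    intro β hβ j
    have happ := congrFun hβ (c j / ε)
    simp only [Finset.sum_apply, Pi.smul_apply, smul_eq_mul, Pi.zero_apply] at happ
    have harg : ∀ l : Fin N, ε * (c j / ε) - c l = c j - c l := fun l => by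
      rw [mul_comm, div_mul_cancel₀ _ hε.ne']
    have hval : ∀ l : Fin N, φ l (c j / ε)
        = Complex.exp (-(Complex.I * (x₀:ℂ)) * ((c j / ε : ℝ):ℂ)) * ((ψ (c j - c l) : ℝ):ℂ) := by
      intro l
      simp only [hφ, φf]
      rw [harg l]
    rw [Finset.sum_eq_single j ?hoff ?hnomem] at happ
    case hoff =>
      intro l _ hlj
      have hz : ψ (c j - c l) = 0 := ψ_zero (by have := hsep j l (fun h => hlj h.symm); linarith)
      rw [hval l, hz]
      simp
    case hnomem => intro h; exact absurd (Finset.mem_univ j) h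
    rw [hval j, sub_self, ψ_at_zero] at happ
    rcases mul_eq_zero.mp happ with h | h
    · exact h
    · exfalso
      rcases div_eq_zero_iff.mp h with h' | h'
      · rcases mul_eq_zero.mp h' with h'' | h''
        · exact Complex.exp_ne_zero _ h''
        · norm_num at h''
      · exact hvne _ h'
  · -- the quadratic form
    intro α hα
    beta_reduce
    set Φ : ℝ → ℂ := fun η => ∑ j, α j * φ j η with hΦ
    have hvG : (fun η : ℝ => (v η : ℂ) * ∑ j, α j * (φ j η / (v η : ℂ))) = Φ := by
      funext η
      rw [Finset.mul_sum, hΦ]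
      refine Finset.sum_congr rfl fun j _ => ?_
      rw [mul_left_comm, mul_comm ((v η : ℂ)) (φ j η / (v η : ℂ)), div_mul_cancel₀ _ (hvne η)]
    have hpt : ∀ ξ : ℝ,
        QD K q (fun η => (v η : ℂ) * ∑ j, α j * (φ j η / (v η : ℂ))) ξ * (v ξ : ℂ)
          * conj (∑ j, α j * (φ j ξ / (v ξ : ℂ)))
        = ∑ j, (α j * conj (α j)) * (QD K q (φ j) ξ * conj (φ j ξ)) := by
      intro ξ
      have hconjpart : (v ξ : ℂ) * conj (∑ j, α j * (φ j ξ / (v ξ : ℂ))) = conj (Φ ξ) := by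
        rw [← Complex.conj_ofReal (v ξ), ← map_mul, Complex.conj_ofReal, congrFun hvG ξ]
      rw [mul_assoc, hconjpart, hvG]
      have hQDΦ : QD K q Φ ξ = ∑ j, α j * QD K q (φ j) ξ := by
        rw [QD]
        calc ∑ k ∈ Finset.range (K+1), (q k : ℂ) * Complex.I ^ k * iteratedDeriv k Φ ξ
            = ∑ k ∈ Finset.range (K+1), ∑ j, (q k : ℂ) * Complex.I ^ k
                * (α j * iteratedDeriv k (φ j) ξ) := by
              refine Finset.sum_congr rfl fun k _ => ?_
              rw [hΦ, iteratedDeriv_linC Finset.univ α (fun j => φ j)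
                (fun j _ => by rw [hφ]; exact φf_smooth x₀ ε (c j)) k ξ, Finset.mul_sum]
          _ = ∑ j, ∑ k ∈ Finset.range (K+1), (q k : ℂ) * Complex.I ^ k
                * (α j * iteratedDeriv k (φ j) ξ) := Finset.sum_comm
          _ = ∑ j, α j * QD K q (φ j) ξ := by
              refine Finset.sum_congr rfl fun j _ => ?_
              rw [QD, Finset.mul_sum]
              exact Finset.sum_congr rfl fun k _ => by ring
      have hconjΦ : conj (Φ ξ) = ∑ j, conj (α j) * conj (φ j ξ) := by
        rw [hΦ]
        push_cast
        rw [map_sum]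
        exact Finset.sum_congr rfl fun j _ => by rw [map_mul]
      rw [hQDΦ, hconjΦ, Finset.sum_mul_sum]
      refine Finset.sum_congr rfl fun j _ => ?_
      rw [Finset.sum_eq_single j ?off ?nomem]
      · ring
      case off =>
        intro l _ hlj
        have hz := QD_phi_mul_phi_eq_zero K q x₀ ε (hsep j l (fun h => hlj h.symm)) ξ
        calc (α j * QD K q (φ j) ξ) * (conj (α l) * conj (φ l ξ))
            = (α j * conj (α l)) * (QD K q (φf x₀ ε (c j)) ξ * conj (φf x₀ ε (c l) ξ)) := by
              rw [hφ]; ring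
          _ = 0 := by rw [hz, mul_zero]
      case nomem => intro h; exact absurd (Finset.mem_univ j) h
    rw [show (fun ξ : ℝ =>
        QD K q (fun η => (v η : ℂ) * ∑ j, α j * (φ j η / (v η : ℂ))) ξ * (v ξ : ℂ)
          * conj (∑ j, α j * (φ j ξ / (v ξ : ℂ))))
      = fun ξ : ℝ => ∑ j, (α j * conj (α j)) * (QD K q (φ j) ξ * conj (φ j ξ))
      from funext hpt]
    have hint : ∀ j : Fin N, Integrable (fun ξ : ℝ => QD K q (φ j) ξ * conj (φ j ξ)) := by
      intro j; rw [hφ]; exact QD_phi_int K q x₀ hε (c j) (c j)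
    rw [integral_finset_sum _ (fun j _ => (hint j).const_mul _)]
    have hIj : ∀ j : Fin N, (∫ ξ : ℝ, QD K q (φ j) ξ * conj (φ j ξ))
        = ((ε⁻¹:ℝ):ℂ) * Efun K q x₀ ε := by
      intro j; rw [hφ]; exact integral_QD_phi K q x₀ hε (c j)
    rw [show (∑ j : Fin N, ∫ ξ : ℝ, (α j * conj (α j)) * (QD K q (φ j) ξ * conj (φ j ξ)))
        = ∑ j : Fin N, (α j * conj (α j)) * (((ε⁻¹:ℝ):ℂ) * Efun K q x₀ ε)
      from Finset.sum_congr rfl fun j _ => by rw [integral_const_mul, hIj j]]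
    have hX : ((ε⁻¹:ℝ):ℂ) * Efun K q x₀ ε < 0 :=
      mul_neg_of_pos_of_neg (Complex.zero_lt_real.mpr (inv_pos.mpr hε)) hEneg
    obtain ⟨j₀, hj₀⟩ := Function.ne_iff.mp hα
    have hle : ∀ j ∈ (Finset.univ : Finset (Fin N)),
        (α j * conj (α j)) * (((ε⁻¹:ℝ):ℂ) * Efun K q x₀ ε) ≤ (fun _ : Fin N => (0:ℂ)) j := by
      intro j _
      rw [Complex.mul_conj]
      calc ((Complex.normSq (α j) : ℝ):ℂ) * (((ε⁻¹:ℝ):ℂ) * Efun K q x₀ ε)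
          ≤ ((Complex.normSq (α j) : ℝ):ℂ) * 0 :=
            mul_le_mul_of_nonneg_left hX.le (Complex.zero_le_real.mpr (Complex.normSq_nonneg _))
        _ = 0 := mul_zero _
    have hstrict : (α j₀ * conj (α j₀)) * (((ε⁻¹:ℝ):ℂ) * Efun K q x₀ ε)
        < (fun _ : Fin N => (0:ℂ)) j₀ := by
      have hj₀' : α j₀ ≠ 0 := by simpa using hj₀
      rw [Complex.mul_conj]
      calc ((Complex.normSq (α j₀) : ℝ):ℂ) * (((ε⁻¹:ℝ):ℂ) * Efun K q x₀ ε)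
          < ((Complex.normSq (α j₀) : ℝ):ℂ) * 0 :=
            mul_lt_mul_of_pos_left hX (Complex.zero_lt_real.mpr (Complex.normSq_pos.mpr hj₀'))
        _ = 0 := mul_zero _
    have hfin := Finset.sum_lt_sum hle ⟨j₀, Finset.mem_univ j₀, hstrict⟩
    simpa using hfin
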